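/- Let q be a prime power, m ≥ 2 an integer, n = q^m − 1, and δ_max = q^{⌈m/2⌉} − 1 − (q−2)·[m is odd]. For every integer x with 1 ≤ x < δ_max, every element of the q-ary cyclotomic coset of n − x modulo n is at least δ_max; equivalently, min C_{−x} ≥ δ_max, where C_{−x} = {(n−x) q^ℓ mod n : ℓ ≥ 0}. -/

import Mathlib

/-- The `q`-ary cyclotomic coset of `x` modulo `n`: `{x q^k mod n : k ≥ 0}`. -/
def cycCoset (q n x : ℕ) : Set ℕ := {y | ∃ k : ℕ, y = x * q ^ k % n}

set_option maxHeartbeats 1000000 in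
private lemma pow_core (q m x ℓ : ℕ) (hq2 : 2 ≤ q) (hm : 2 ≤ m) (hx1 : 1 ≤ x)
    (hx2 : x < q ^ ((m + 1) / 2) - 1 - (q - 2) * (if Odd m then 1 else 0))
    (hl : ℓ < m) :
    x * q ^ ℓ % (q ^ m - 1) + (q ^ ((m + 1) / 2) - 1 - (q - 2) * (if Odd m then 1 else 0)) + 1
      ≤ q ^ m := by
  have hq1 : 1 ≤ q := by omega
  set s := (m + 1) / 2 with hs
  obtain ⟨D, hD⟩ : ∃ D, q ^ s - 1 - (q - 2) * (if Odd m then 1 else 0) = D := ⟨_, rfl⟩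
  rw [hD] at hx2 ⊢
  set r := m - ℓ with hr
  have hr1 : 1 ≤ r := by omega
  have hrl : r + ℓ = m := by omega
  have hqr0 : 0 < q ^ r := Nat.pow_pos (by omega)
  obtain ⟨A, B, hxAB, hBlt⟩ : ∃ A B, A * q ^ r + B = x ∧ B < q ^ r :=
    ⟨x / q ^ r, x % q ^ r, by rw [mul_comm]; exact Nat.div_add_mod x (q ^ r),
      Nat.mod_lt x hqr0⟩
  have hqm : q ^ r * q ^ ℓ = q ^ m := by rw [← pow_add, hrl]
  have hqm1 : 1 ≤ q ^ m := Nat.one_le_pow m q (by omega)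
  have hqs1 : 1 ≤ q ^ s := Nat.one_le_pow s q (by omega)
  have hqss : q ≤ q ^ s := by
    calc q = q ^ 1 := (pow_one q).symm
      _ ≤ q ^ s := Nat.pow_le_pow_right hq1 (by omega)
  -- rewrite x * q^ℓ
  have hv : x * q ^ ℓ = A * (q ^ m - 1) + (A + B * q ^ ℓ) := by
    have h1 : A * (q ^ m - 1) + A = A * q ^ m := by
      have hA_le : A ≤ A * q ^ m := Nat.le_mul_of_pos_right A (by omega)
      rw [Nat.mul_sub, mul_one]; omega
    calc x * q ^ ℓ = (A * q ^ r + B) * q ^ ℓ := by rw [hxAB]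
      _ = A * (q ^ r * q ^ ℓ) + B * q ^ ℓ := by ring
      _ = A * q ^ m + B * q ^ ℓ := by rw [hqm]
      _ = A * (q ^ m - 1) + (A + B * q ^ ℓ) := by linarith [h1]
  -- the key inequality
  have hkey : A + B * q ^ ℓ + D + 1 ≤ q ^ m := by
    obtain ⟨C, hC⟩ : ∃ C, A + B * q ^ ℓ = C := ⟨_, rfl⟩
    rw [hC]
    rcases Nat.even_or_odd m with he | ho
    · -- even case: m = 2 * s
      rw [if_neg (by simpa using he)] at hD
      simp only [mul_zero, Nat.sub_zero] at hD
      obtain ⟨c, hc⟩ := he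
      have hms : m = 2 * s := by omega
      have hxs : x + 2 ≤ q ^ s := by omega
      have main : A + B * q ^ ℓ + q ^ s ≤ q ^ m := by
        by_cases hrs : s ≤ r
        · -- ℓ ≤ s : A = 0, B = x
          have hqsr : q ^ s ≤ q ^ r := Nat.pow_le_pow_right hq1 hrs
          have hA0 : A = 0 := by
            by_contra h
            have h1 : 1 ≤ A := Nat.pos_of_ne_zero h
            have h2 : q ^ r ≤ A * q ^ r := Nat.le_mul_of_pos_left (q ^ r) h1
            linarith
          subst hA0
          rw [zero_mul, zero_add] at hxAB
          subst hxAB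
          rcases Nat.eq_or_lt_of_le (show ℓ ≤ s by omega) with hls | hls
          · -- ℓ = s
            have h2 : q ^ s * q ^ ℓ = q ^ m := by
              have h5 : s + ℓ = m := by omega
              rw [← pow_add, h5]
            have h1 : B * q ^ ℓ + q ^ ℓ ≤ q ^ m := by
              calc B * q ^ ℓ + q ^ ℓ = (B + 1) * q ^ ℓ := by ring
                _ ≤ q ^ s * q ^ ℓ := Nat.mul_le_mul_right _ (by omega)
                _ = q ^ m := h2
            have h3 : q ^ s ≤ q ^ ℓ := Nat.pow_le_pow_right hq1 (by omega)
            linarith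
          · -- ℓ < s
            have h1 : B * q ^ ℓ ≤ q ^ s * q ^ ℓ := Nat.mul_le_mul_right _ (by omega)
            have h2 : q ^ s * q ^ ℓ ≤ q ^ (m - 1) := by
              rw [← pow_add]; exact Nat.pow_le_pow_right hq1 (by omega)
            have h3 : q ^ s ≤ q ^ (m - 1) := Nat.pow_le_pow_right hq1 (by omega)
            have h4 : 2 * q ^ (m - 1) ≤ q ^ m := by
              calc 2 * q ^ (m - 1) ≤ q * q ^ (m - 1) := Nat.mul_le_mul_right _ hq2
                _ = q ^ m := by
                  have h5 : (m - 1) + 1 = m := by omega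
                  rw [← pow_succ', h5]
            linarith
        · -- r < s, set j := s - r, ℓ = s + j
          push_neg at hrs
          set j := s - r with hj
          have hj1 : 1 ≤ j := by omega
          have hlsj : ℓ = s + j := by omega
          have hqjr : q ^ j * q ^ r = q ^ s := by
            have h5 : j + r = s := by omega
            rw [← pow_add, h5]
          have hAlt : A < q ^ j := by
            have h1 : A * q ^ r < q ^ j * q ^ r := by rw [hqjr]; linarith
            exact lt_of_mul_lt_mul_right h1 (Nat.zero_le _)
          have hjl : q ^ j ≤ q ^ (ℓ - 1) := Nat.pow_le_pow_right hq1 (by omega)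
          have hsl : q ^ s ≤ q ^ (ℓ - 1) := Nat.pow_le_pow_right hq1 (by omega)
          have h2l : 2 * q ^ (ℓ - 1) ≤ q ^ ℓ := by
            calc 2 * q ^ (ℓ - 1) ≤ q * q ^ (ℓ - 1) := Nat.mul_le_mul_right _ hq2
              _ = q ^ ℓ := by
                have h5 : (ℓ - 1) + 1 = ℓ := by omega
                rw [← pow_succ', h5]
          rcases Nat.eq_or_lt_of_le (show B + 1 ≤ q ^ r by omega) with hBr | hBr
          · -- B = q^r - 1
            have h1 : (A + 1) * q ^ r = x + 1 := by rw [add_mul, one_mul]; linarith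
            have hA2 : A + 2 ≤ q ^ j := by
              by_contra hcon
              have hq1' : q ^ j ≤ A + 1 := by omega
              have h2 : q ^ j * q ^ r ≤ (A + 1) * q ^ r := Nat.mul_le_mul_right _ hq1'
              rw [hqjr, h1] at h2
              omega
            have hBq : B * q ^ ℓ + q ^ ℓ = q ^ m := by
              have h3 : (B + 1) * q ^ ℓ = q ^ r * q ^ ℓ := by rw [hBr]
              rw [hqm] at h3; linarith
            linarith
          · -- B + 2 ≤ q^r
            have hBq : B * q ^ ℓ + 2 * q ^ ℓ ≤ q ^ m := by
              have h3 : (B + 2) * q ^ ℓ ≤ q ^ r * q ^ ℓ := Nat.mul_le_mul_right _ (by omega)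
              rw [hqm] at h3; linarith
            linarith
      rw [hC] at main
      omega
    · -- odd case: m = 2 * s - 1
      rw [if_pos ho] at hD
      simp only [mul_one] at hD
      obtain ⟨c, hc⟩ := ho
      have hms : m + 1 = 2 * s := by omega
      have hs2 : 2 ≤ s := by omega
      have hxs : x + q ≤ q ^ s := by omega
      have main : A + B * q ^ ℓ + q ^ s + 2 ≤ q ^ m + q := by
        by_cases hrs : s ≤ r
        · -- ℓ ≤ s - 1 : A = 0, B = x
          have hqsr : q ^ s ≤ q ^ r := Nat.pow_le_pow_right hq1 hrs
          have hA0 : A = 0 := by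
            by_contra h
            have h1 : 1 ≤ A := Nat.pos_of_ne_zero h
            have h2 : q ^ r ≤ A * q ^ r := Nat.le_mul_of_pos_left (q ^ r) h1
            linarith
          subst hA0
          rw [zero_mul, zero_add] at hxAB
          subst hxAB
          rcases Nat.eq_or_lt_of_le (show ℓ + 1 ≤ s by omega) with hls | hls
          · -- ℓ = s - 1
            have h1 : B * q ^ ℓ + q * q ^ ℓ ≤ q ^ s * q ^ ℓ := by
              calc B * q ^ ℓ + q * q ^ ℓ = (B + q) * q ^ ℓ := by ring
                _ ≤ q ^ s * q ^ ℓ := Nat.mul_le_mul_right _ hxs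
            have h2 : q ^ s * q ^ ℓ = q ^ m := by
              have h5 : s + ℓ = m := by omega
              rw [← pow_add, h5]
            have h3 : q * q ^ ℓ = q ^ s := by
              have h5 : ℓ + 1 = s := by omega
              rw [← pow_succ', h5]
            linarith
          · -- ℓ + 2 ≤ s
            have h1 : B * q ^ ℓ ≤ q ^ s * q ^ ℓ := Nat.mul_le_mul_right _ (by omega)
            have h2 : q ^ s * q ^ ℓ ≤ q ^ (m - 1) := by
              rw [← pow_add]; exact Nat.pow_le_pow_right hq1 (by omega)
            have h3 : q ^ s ≤ q ^ (m - 1) := Nat.pow_le_pow_right hq1 (by omega)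
            have h4 : 2 * q ^ (m - 1) ≤ q ^ m := by
              calc 2 * q ^ (m - 1) ≤ q * q ^ (m - 1) := Nat.mul_le_mul_right _ hq2
                _ = q ^ m := by
                  have h5 : (m - 1) + 1 = m := by omega
                  rw [← pow_succ', h5]
            linarith
        · -- r < s, set j := s - r, ℓ = s + j - 1
          push_neg at hrs
          set j := s - r with hj
          have hj1 : 1 ≤ j := by omega
          have hlsj : ℓ + 1 = s + j := by omega
          have hqjr : q ^ j * q ^ r = q ^ s := by
            have h5 : j + r = s := by omega
            rw [← pow_add, h5]
          have hAlt : A < q ^ j := by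
            have h1 : A * q ^ r < q ^ j * q ^ r := by rw [hqjr]; linarith
            exact lt_of_mul_lt_mul_right h1 (Nat.zero_le _)
          have hjl : q ^ j ≤ q ^ (ℓ - 1) := Nat.pow_le_pow_right hq1 (by omega)
          have hsl : q ^ s ≤ q ^ ℓ := Nat.pow_le_pow_right hq1 (by omega)
          have h2l : 2 * q ^ (ℓ - 1) ≤ q ^ ℓ := by
            calc 2 * q ^ (ℓ - 1) ≤ q * q ^ (ℓ - 1) := Nat.mul_le_mul_right _ hq2
              _ = q ^ ℓ := by
                have h5 : (ℓ - 1) + 1 = ℓ := by omega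
                rw [← pow_succ', h5]
          have hll : q ^ (ℓ - 1) ≤ q ^ ℓ := Nat.pow_le_pow_right hq1 (by omega)
          rcases Nat.eq_or_lt_of_le (show B + 1 ≤ q ^ r by omega) with hBr | hBr
          · -- B = q^r - 1
            have hBq : B * q ^ ℓ + q ^ ℓ = q ^ m := by
              have h3 : (B + 1) * q ^ ℓ = q ^ r * q ^ ℓ := by rw [hBr]
              rw [hqm] at h3; linarith
            rcases Nat.eq_or_lt_of_le hj1 with hj1' | hj2
            · -- j = 1, ℓ = s, A ≤ q - 2
              have hls : ℓ = s := by omega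
              have h1 : (A + 1) * q ^ r = x + 1 := by rw [add_mul, one_mul]; linarith
              have hA2 : A + 2 ≤ q := by
                by_contra hcon
                have hq1' : q ≤ A + 1 := by omega
                have h2 : q * q ^ r ≤ (A + 1) * q ^ r := Nat.mul_le_mul_right _ hq1'
                have h3 : q * q ^ r = q ^ s := by
                  have h5 : r + 1 = s := by omega
                  rw [← pow_succ', h5]
                rw [h1, h3] at h2
                omega
              have hqls : q ^ ℓ = q ^ s := by rw [hls]
              linarith
            · -- j ≥ 2
              have hsl' : q ^ s ≤ q ^ (ℓ - 1) := Nat.pow_le_pow_right hq1 (by omega)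
              linarith
          · -- B + 2 ≤ q^r
            have hBq : B * q ^ ℓ + 2 * q ^ ℓ ≤ q ^ m := by
              have h3 : (B + 2) * q ^ ℓ ≤ q ^ r * q ^ ℓ := Nat.mul_le_mul_right _ (by omega)
              rw [hqm] at h3; linarith
            linarith
      rw [hC] at main
      omega
  -- conclude: x * q^ℓ % (q^m - 1) = A + B * q^ℓ
  have hDpos : 1 ≤ D := le_of_lt (lt_of_le_of_lt hx1 hx2)
  have hmod : x * q ^ ℓ % (q ^ m - 1) = A + B * q ^ ℓ := by
    have hlt : A + B * q ^ ℓ < q ^ m - 1 := by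
      obtain ⟨C, hC⟩ : ∃ C, A + B * q ^ ℓ = C := ⟨_, rfl⟩
      rw [hC] at hkey ⊢
      omega
    rw [hv, mul_comm A (q ^ m - 1), Nat.mul_add_mod, Nat.mod_eq_of_lt hlt]
  rw [hmod]
  exact hkey

/-- For `n = q^m - 1`, `m ≥ 2`, and `δ_max = q^⌈m/2⌉ - 1 - (q-2)·[m odd]`:
for every `1 ≤ x < δ_max`, every element of the `q`-ary cyclotomic coset of
`n - x` (i.e. of `-x` mod `n`) is at least `δ_max`. -/
theorem cycCoset_neg_min
    (q m : ℕ) (hq : IsPrimePow q) (hm : 2 ≤ m)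
    (x : ℕ) (hx1 : 1 ≤ x)
    (hx2 : x < q ^ ((m + 1) / 2) - 1 - (q - 2) * (if Odd m then 1 else 0)) :
    ∀ y ∈ cycCoset q (q ^ m - 1) (q ^ m - 1 - x),
      q ^ ((m + 1) / 2) - 1 - (q - 2) * (if Odd m then 1 else 0) ≤ y := by
  intro y hy
  obtain ⟨k, hk⟩ := hy
  have hq2 : 2 ≤ q := hq.two_le
  have hq1 : 1 ≤ q := by omega
  set n := q ^ m - 1 with hn
  have h4 : 4 ≤ q ^ m := by
    calc (4 : ℕ) = 2 ^ 2 := by norm_num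
      _ ≤ q ^ 2 := Nat.pow_le_pow_left hq2 2
      _ ≤ q ^ m := Nat.pow_le_pow_right hq1 hm
  have hn0 : 0 < n := by omega
  -- core bound on w = x * q ^ ℓ % n, for ℓ = k % m
  set ℓ := k % m with hl
  have hlm : ℓ < m := Nat.mod_lt k (by omega)
  obtain ⟨w, hw⟩ : ∃ w, x * q ^ ℓ % n = w := ⟨_, rfl⟩
  obtain ⟨D, hD⟩ : ∃ D, q ^ ((m + 1) / 2) - 1 - (q - 2) * (if Odd m then 1 else 0) = D :=
    ⟨_, rfl⟩
  rw [hD] at hx2 ⊢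
  have hcore : w + D + 1 ≤ q ^ m := by
    rw [← hw, ← hD]
    exact pow_core q m x ℓ hq2 hm hx1 (by rw [hD]; exact hx2) hlm
  have hDn : D ≤ n := by
    have h5 : D ≤ q ^ ((m + 1) / 2) - 1 := by rw [← hD]; exact Nat.sub_le _ _
    have h6 : q ^ ((m + 1) / 2) ≤ q ^ m := Nat.pow_le_pow_right hq1 (by omega)
    omega
  have hxn : x < n := by omega
  -- reduce the exponent mod m
  have hmodeq : (n - x) * q ^ k ≡ (n - x) * q ^ ℓ [MOD n] := by
    have h1 : q ^ k = (q ^ m) ^ (k / m) * q ^ ℓ := by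
      rw [← pow_mul, ← pow_add, Nat.div_add_mod]
    have h2 : q ^ m ≡ 1 [MOD n] := by
      show q ^ m % n = 1 % n
      have h7 : q ^ m = n + 1 := by omega
      rw [h7, Nat.add_mod_left]
    have h3 : (q ^ m) ^ (k / m) ≡ 1 [MOD n] := by
      simpa using h2.pow (k / m)
    calc (n - x) * q ^ k = (n - x) * ((q ^ m) ^ (k / m) * q ^ ℓ) := by rw [h1]
      _ = (q ^ m) ^ (k / m) * ((n - x) * q ^ ℓ) := by ring
      _ ≡ 1 * ((n - x) * q ^ ℓ) [MOD n] := h3.mul_right _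
      _ = (n - x) * q ^ ℓ := by ring
  have hk' : y = (n - x) * q ^ ℓ % n := by
    rw [hk]; exact hmodeq
  -- w ≥ 1
  have hcop : Nat.Coprime n (q ^ ℓ) := by
    have h1 : Nat.Coprime n (q ^ m) := by
      have h7 : q ^ m = n + 1 := by omega
      rw [h7]
      simp
    have h2 : Nat.Coprime n q := ((Nat.coprime_pow_right_iff (by omega : 0 < m)) n q).mp h1
    exact h2.pow_right ℓ
  have hw1 : 1 ≤ w := by
    rcases Nat.eq_zero_or_pos w with h0 | h
    · exfalso
      rw [← hw] at h0
      have hdvd : n ∣ x * q ^ ℓ := Nat.dvd_of_mod_eq_zero h0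
      have h8 : n ∣ x := (Nat.Coprime.dvd_of_dvd_mul_right hcop) hdvd
      have := Nat.le_of_dvd (by omega) h8
      omega
    · exact h
  have hwlt : w < n := by rw [← hw]; exact Nat.mod_lt _ hn0
  have hylt : y < n := by rw [hk']; exact Nat.mod_lt _ hn0
  -- y + w = n
  have hsum : y + w = n := by
    have hadd : ((n - x) * q ^ ℓ + x * q ^ ℓ) % n = 0 := by
      rw [← add_mul, Nat.sub_add_cancel (le_of_lt hxn)]
      simp [Nat.mul_mod_right]
    have hmm : (y + w) % n = 0 := by
      rw [hk', ← hw, ← Nat.add_mod]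
      exact hadd
    obtain ⟨c, hc⟩ := Nat.dvd_of_mod_eq_zero hmm
    rcases c with _ | _ | c
    · omega
    · omega
    · exfalso
      have h2n : n * 2 ≤ n * (c + 2) := Nat.mul_le_mul_left n (by omega)
      linarith
  omega
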